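/- Let A be a unique factorization domain, let ξ ∈ K̄ be such that 1, ξ and ξ² are linearly independent over K, let 0 < c₁ < 6^{−1/2} and let X ≥ 1 be such that the set S(X) of primitive triples x = (x₀,x₁,x₂) ∈ A³ (i.e. with gcd(x₀,x₁,x₂) = 1) satisfying |x₀| ≤ X and L(x) ≤ c₁·X^{−1/γ} is nonempty. Then ℓ(X) := inf{L(x) : x ∈ S(X)} is strictly positive. -/

import Mathlib

open Filter

lemma prim_prop_unit {A : Type*} [CommRing A] [IsDomain A] [UniqueFactorizationMonoid A]
    (x y : Fin 3 → A)
    (hx : ∀ d : A, d ∣ x 0 → d ∣ x 1 → d ∣ x 2 → IsUnit d)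
    (hy : ∀ d : A, d ∣ y 0 → d ∣ y 1 → d ∣ y 2 → IsUnit d)
    (h01 : x 0 * y 1 - x 1 * y 0 = 0)
    (h02 : x 0 * y 2 - x 2 * y 0 = 0)
    (h12 : x 1 * y 2 - x 2 * y 1 = 0) :
    ∃ c : A, IsUnit c ∧ ∀ i, y i = c * x i := by
  letI : GCDMonoid A := UniqueFactorizationMonoid.toGCDMonoid A
  have hx0 : ∃ j : Fin 3, x j ≠ 0 := by
    by_contra h
    push_neg at h
    have := hx 0 (by rw [h 0]) (by rw [h 1]) (by rw [h 2])
    exact not_isUnit_zero this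
  obtain ⟨j, hj⟩ := hx0
  have key : ∀ i, x j * y i = y j * x i := by
    intro i
    fin_cases j <;> fin_cases i <;>
      (first | exact mul_comm _ _ | exact (sub_eq_zero.mp h01).trans (mul_comm _ _) | exact (sub_eq_zero.mp h01).symm.trans (mul_comm _ _) | exact (sub_eq_zero.mp h02).trans (mul_comm _ _) | exact (sub_eq_zero.mp h02).symm.trans (mul_comm _ _) | exact (sub_eq_zero.mp h12).trans (mul_comm _ _) | exact (sub_eq_zero.mp h12).symm.trans (mul_comm _ _))
  set b := x j with hb
  set a := y j with ha
  have hdvd : ∀ i, b ∣ a * x i := fun i => ⟨y i, (key i).symm⟩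
  have hba : b ∣ a := by
    have h12' : b ∣ a * gcd (x 1) (x 2) :=
      dvd_trans (dvd_gcd (hdvd 1) (hdvd 2)) (gcd_mul_left' a (x 1) (x 2)).dvd
    have h012 : b ∣ a * gcd (x 0) (gcd (x 1) (x 2)) :=
      dvd_trans (dvd_gcd (hdvd 0) h12') (gcd_mul_left' a (x 0) (gcd (x 1) (x 2))).dvd
    have hd : IsUnit (gcd (x 0) (gcd (x 1) (x 2))) :=
      hx _ (gcd_dvd_left _ _) ((gcd_dvd_right _ _).trans (gcd_dvd_left _ _))
        ((gcd_dvd_right _ _).trans (gcd_dvd_right _ _))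
    obtain ⟨u, hu⟩ := hd
    rw [← hu] at h012
    exact h012.trans ((Units.mul_right_dvd).mpr dvd_rfl)
  obtain ⟨c, hc⟩ := hba
  have hyi : ∀ i, y i = c * x i := by
    intro i
    have h := key i
    rw [hc] at h
    have h' : b * y i = b * (c * x i) := by rw [h]; ring
    exact mul_left_cancel₀ hj h'
  exact ⟨c, hy c ⟨x 0, hyi 0⟩ ⟨x 1, hyi 1⟩ ⟨x 2, hyi 2⟩, hyi⟩

set_option maxHeartbeats 1000000 in
theorem ellX_pos
    {A : Type*} [CommRing A] [IsDomain A] [UniqueFactorizationMonoid A]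
    {K : Type*} [Field K] [Algebra A K] [IsFractionRing A K]
    {L : Type*} [Field L] [MetricSpace L] [CompleteSpace L]
    (f : K →+* L) (hdense : DenseRange f)
    (abv : AbsoluteValue L ℝ)
    (hdist : ∀ x y : L, dist x y = abv (x - y))
    (habv_nontrivial : ∃ x : K, abv (f x) ≠ 0 ∧ abv (f x) ≠ 1)
    (habv_A : ∀ a : A, a ≠ 0 → 1 ≤ abv (f (algebraMap A K a)))
    (ξ : L)
    (hξ : ∀ c₀ c₁ c₂ : K, f c₀ + f c₁ * ξ + f c₂ * ξ ^ 2 = 0 →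
      c₀ = 0 ∧ c₁ = 0 ∧ c₂ = 0)
    (c₁ X : ℝ) (hc₁ : 0 < c₁) (hc₁' : c₁ < (6 : ℝ) ^ (-1 / 2 : ℝ)) (hX : 1 ≤ X)
    (S : Set (Fin 3 → A))
    (hS : S = {x : Fin 3 → A |
      (∀ d : A, d ∣ x 0 → d ∣ x 1 → d ∣ x 2 → IsUnit d) ∧
      abv (f (algebraMap A K (x 0))) ≤ X ∧
      max (abv (f (algebraMap A K (x 0)) * ξ - f (algebraMap A K (x 1))))
          (abv (f (algebraMap A K (x 0)) * ξ ^ 2 - f (algebraMap A K (x 2))))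
        ≤ c₁ * X ^ (-1 / Real.goldenRatio)})
    (hS_ne : S.Nonempty) :
    0 < sInf ((fun x : Fin 3 → A =>
      max (abv (f (algebraMap A K (x 0)) * ξ - f (algebraMap A K (x 1))))
          (abv (f (algebraMap A K (x 0)) * ξ ^ 2 - f (algebraMap A K (x 2))))) '' S) := by
  set g : A →+* L := f.comp (algebraMap A K) with hg
  have hgdef : ∀ a : A, f (algebraMap A K a) = g a := fun a => rfl
  have hgA : ∀ a : A, a ≠ 0 → 1 ≤ abv (g a) := fun a ha => habv_A a ha
  set Lf : (Fin 3 → A) → ℝ := fun x =>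
      max (abv (g (x 0) * ξ - g (x 1))) (abv (g (x 0) * ξ ^ 2 - g (x 2))) with hLf
  have hgoal : ((fun x : Fin 3 → A =>
      max (abv (f (algebraMap A K (x 0)) * ξ - f (algebraMap A K (x 1))))
          (abv (f (algebraMap A K (x 0)) * ξ ^ 2 - f (algebraMap A K (x 2))))) '' S)
      = Lf '' S := rfl
  rw [hgoal]
  have hXpos : (0 : ℝ) < X := lt_of_lt_of_le one_pos hX
  have habv_sub : ∀ u v : L, abv (u - v) ≤ abv u + abv v := by
    intro u v
    simpa [sub_eq_add_neg, abv.map_neg] using abv.add_le u (-v)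
  have hLnonneg : ∀ x : Fin 3 → A, 0 ≤ Lf x := fun x =>
    le_trans (abv.nonneg _) (le_max_left _ _)
  -- positivity of Lf on S
  have hLpos : ∀ x ∈ S, 0 < Lf x := by
    intro x hxS
    rw [hS] at hxS
    obtain ⟨hprim, -, -⟩ := hxS
    rcases lt_or_eq_of_le (hLnonneg x) with h | h
    · exact h
    · exfalso
      have h1 : abv (g (x 0) * ξ - g (x 1)) = 0 :=
        le_antisymm (le_trans (le_max_left _ _) h.symm.le) (abv.nonneg _)
      have h2 : abv (g (x 0) * ξ ^ 2 - g (x 2)) = 0 :=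
        le_antisymm (le_trans (le_max_right _ _) h.symm.le) (abv.nonneg _)
      rw [abv.eq_zero] at h1 h2
      rw [sub_eq_zero] at h1 h2
      have e1 : f (-(algebraMap A K (x 1))) + f (algebraMap A K (x 0)) * ξ
          + f (0 : K) * ξ ^ 2 = 0 := by
        rw [map_neg, map_zero, hgdef, hgdef, h1]; ring
      have e2 : f (-(algebraMap A K (x 2))) + f (0 : K) * ξ
          + f (algebraMap A K (x 0)) * ξ ^ 2 = 0 := by
        rw [map_neg, map_zero, hgdef, hgdef, h2]; ring
      obtain ⟨hc0, hc1', -⟩ := hξ _ _ _ e1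
      obtain ⟨hc0', -, -⟩ := hξ _ _ _ e2
      have hx0 : x 0 = 0 := IsFractionRing.injective A K (by rw [hc1', map_zero])
      have hx1 : x 1 = 0 := IsFractionRing.injective A K
        (by rw [show algebraMap A K (x 1) = 0 from neg_eq_zero.mp hc0, map_zero])
      have hx2 : x 2 = 0 := IsFractionRing.injective A K
        (by rw [show algebraMap A K (x 2) = 0 from neg_eq_zero.mp hc0', map_zero])
      exact not_isUnit_zero (hprim 0 (by rw [hx0]) (by rw [hx1]) (by rw [hx2]))
  have hrpow1 : X ^ (-1 / Real.goldenRatio) ≤ 1 :=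
    Real.rpow_le_one_of_one_le_of_nonpos hX
      (div_nonpos_iff.mpr (Or.inr ⟨by norm_num, Real.goldenRatio_pos.le⟩))
  have hLc : ∀ x ∈ S, Lf x ≤ c₁ := by
    intro x hxS
    rw [hS] at hxS
    refine le_trans hxS.2.2 ?_
    calc c₁ * X ^ (-1 / Real.goldenRatio) ≤ c₁ * 1 :=
          mul_le_mul_of_nonneg_left hrpow1 hc₁.le
      _ = c₁ := mul_one c₁
  set B := abv ξ with hB
  have hBnn : 0 ≤ B := abv.nonneg ξ
  set C : ℝ := X + (X * B + c₁) + 1 with hC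
  have hCpos : 0 < C := by positivity
  have hCne : C ≠ 0 := hCpos.ne'
  have hXC : X ≤ C := by nlinarith [mul_nonneg hXpos.le hBnn, hc₁.le]
  have hXBC : X * B + c₁ ≤ C := by nlinarith
  have hx1bound : ∀ x ∈ S, abv (g (x 1)) ≤ X * B + c₁ := by
    intro x hxS
    have hxm := hS ▸ hxS
    have h0 : abv (g (x 0)) ≤ X := hxm.2.1
    have h1 : abv (g (x 0) * ξ - g (x 1)) ≤ c₁ :=
      le_trans (le_max_left _ _) (hLc x hxS)
    calc abv (g (x 1)) = abv (g (x 0) * ξ - (g (x 0) * ξ - g (x 1))) := by congr 1; ring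
      _ ≤ abv (g (x 0) * ξ) + abv (g (x 0) * ξ - g (x 1)) := habv_sub _ _
      _ ≤ X * B + c₁ := by
          refine add_le_add ?_ h1
          rw [abv.map_mul]
          exact mul_le_mul h0 le_rfl (abv.nonneg _) hXpos.le
  by_contra hcon
  push_neg at hcon
  have hTne : (Lf '' S).Nonempty := hS_ne.image Lf
  have hInf0 : sInf (Lf '' S) = 0 :=
    le_antisymm hcon (le_csInf hTne (fun t ht => by
      obtain ⟨x, -, rfl⟩ := ht; exact hLnonneg x))
  set ε : ℝ := 1 / (2 * C) with hε
  have hεpos : 0 < ε := by positivity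
  obtain ⟨t, htT, htlt⟩ := exists_lt_of_csInf_lt hTne (by rw [hInf0]; exact hεpos)
  obtain ⟨x, hxS, rfl⟩ := htT
  have hminpos : 0 < min (Lf x) ε := lt_min (hLpos x hxS) hεpos
  obtain ⟨s, hsT, hslt⟩ := exists_lt_of_csInf_lt hTne (by rw [hInf0]; exact hminpos)
  obtain ⟨y, hyS, rfl⟩ := hsT
  have hLy_lt_Lx : Lf y < Lf x := lt_of_lt_of_le hslt (min_le_left _ _)
  have hLyε : Lf y < ε := lt_of_lt_of_le hslt (min_le_right _ _)
  have hxm := hS ▸ hxS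
  have hym := hS ▸ hyS
  have hx0X : abv (g (x 0)) ≤ X := hxm.2.1
  have hy0X : abv (g (y 0)) ≤ X := hym.2.1
  have hClt : C * (Lf x + Lf y) < 1 := by
    have h2 : Lf x + Lf y < 2 * ε := by linarith
    have h3 : C * (Lf x + Lf y) < C * (2 * ε) := mul_lt_mul_of_pos_left h2 hCpos
    have h4 : C * (2 * ε) = 1 := by
      rw [hε]; field_simp
    linarith
  have he1x : abv (g (x 0) * ξ - g (x 1)) ≤ Lf x := le_max_left _ _
  have he2x : abv (g (x 0) * ξ ^ 2 - g (x 2)) ≤ Lf x := le_max_right _ _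
  have he1y : abv (g (y 0) * ξ - g (y 1)) ≤ Lf y := le_max_left _ _
  have he2y : abv (g (y 0) * ξ ^ 2 - g (y 2)) ≤ Lf y := le_max_right _ _
  have hsmall : ∀ m : A, abv (g m) < 1 → m = 0 := by
    intro m hm
    by_contra hm0
    exact absurd (hgA m hm0) (not_le.mpr hm)
  -- minor (0,1)
  have hm01 : x 0 * y 1 - x 1 * y 0 = 0 := by
    apply hsmall
    have hid : g (x 0 * y 1 - x 1 * y 0)
        = g (y 0) * (g (x 0) * ξ - g (x 1)) - g (x 0) * (g (y 0) * ξ - g (y 1)) := by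
      simp only [map_sub, map_mul]; ring
    calc abv (g (x 0 * y 1 - x 1 * y 0))
        ≤ abv (g (y 0) * (g (x 0) * ξ - g (x 1)))
          + abv (g (x 0) * (g (y 0) * ξ - g (y 1))) := by rw [hid]; exact habv_sub _ _
      _ = abv (g (y 0)) * abv (g (x 0) * ξ - g (x 1))
          + abv (g (x 0)) * abv (g (y 0) * ξ - g (y 1)) := by rw [abv.map_mul, abv.map_mul]
      _ ≤ X * Lf x + X * Lf y :=
          add_le_add (mul_le_mul hy0X he1x (abv.nonneg _) hXpos.le)
            (mul_le_mul hx0X he1y (abv.nonneg _) hXpos.le)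
      _ ≤ C * (Lf x + Lf y) := by nlinarith [hLnonneg x, hLnonneg y]
      _ < 1 := hClt
  -- minor (0,2)
  have hm02 : x 0 * y 2 - x 2 * y 0 = 0 := by
    apply hsmall
    have hid : g (x 0 * y 2 - x 2 * y 0)
        = g (y 0) * (g (x 0) * ξ ^ 2 - g (x 2)) - g (x 0) * (g (y 0) * ξ ^ 2 - g (y 2)) := by
      simp only [map_sub, map_mul]; ring
    calc abv (g (x 0 * y 2 - x 2 * y 0))
        ≤ abv (g (y 0) * (g (x 0) * ξ ^ 2 - g (x 2)))
          + abv (g (x 0) * (g (y 0) * ξ ^ 2 - g (y 2))) := by rw [hid]; exact habv_sub _ _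
      _ = abv (g (y 0)) * abv (g (x 0) * ξ ^ 2 - g (x 2))
          + abv (g (x 0)) * abv (g (y 0) * ξ ^ 2 - g (y 2)) := by rw [abv.map_mul, abv.map_mul]
      _ ≤ X * Lf x + X * Lf y :=
          add_le_add (mul_le_mul hy0X he2x (abv.nonneg _) hXpos.le)
            (mul_le_mul hx0X he2y (abv.nonneg _) hXpos.le)
      _ ≤ C * (Lf x + Lf y) := by nlinarith [hLnonneg x, hLnonneg y]
      _ < 1 := hClt
  -- minor (1,2), using hm01
  have hm12 : x 1 * y 2 - x 2 * y 1 = 0 := by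
    apply hsmall
    have hg01 : g (x 0) * g (y 1) - g (x 1) * g (y 0) = 0 := by
      have h := congrArg g hm01
      rw [map_sub, map_mul, map_mul, map_zero] at h
      exact h
    have hid : g (x 1 * y 2 - x 2 * y 1)
        = g (y 1) * (g (x 0) * ξ ^ 2 - g (x 2)) - g (x 1) * (g (y 0) * ξ ^ 2 - g (y 2)) := by
      rw [map_sub, map_mul, map_mul]
      linear_combination (-(ξ ^ 2)) * hg01
    have hx1b : abv (g (x 1)) ≤ X * B + c₁ := hx1bound x hxS
    have hy1b : abv (g (y 1)) ≤ X * B + c₁ := hx1bound y hyS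
    have hXBc : (0 : ℝ) ≤ X * B + c₁ := by positivity
    calc abv (g (x 1 * y 2 - x 2 * y 1))
        ≤ abv (g (y 1) * (g (x 0) * ξ ^ 2 - g (x 2)))
          + abv (g (x 1) * (g (y 0) * ξ ^ 2 - g (y 2))) := by rw [hid]; exact habv_sub _ _
      _ = abv (g (y 1)) * abv (g (x 0) * ξ ^ 2 - g (x 2))
          + abv (g (x 1)) * abv (g (y 0) * ξ ^ 2 - g (y 2)) := by rw [abv.map_mul, abv.map_mul]
      _ ≤ (X * B + c₁) * Lf x + (X * B + c₁) * Lf y :=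
          add_le_add (mul_le_mul hy1b he2x (abv.nonneg _) hXBc)
            (mul_le_mul hx1b he2y (abv.nonneg _) hXBc)
      _ ≤ C * (Lf x + Lf y) := by nlinarith [hLnonneg x, hLnonneg y]
      _ < 1 := hClt
  obtain ⟨c, hcunit, hyx⟩ := prim_prop_unit x y hxm.1 hym.1 hm01 hm02 hm12
  have hcne : c ≠ 0 := hcunit.ne_zero
  have hc1 : 1 ≤ abv (g c) := hgA c hcne
  have hscale1 : g (y 0) * ξ - g (y 1) = g c * (g (x 0) * ξ - g (x 1)) := by
    rw [hyx 0, hyx 1, map_mul, map_mul]; ring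
  have hscale2 : g (y 0) * ξ ^ 2 - g (y 2) = g c * (g (x 0) * ξ ^ 2 - g (x 2)) := by
    rw [hyx 0, hyx 2, map_mul, map_mul]; ring
  have hge : Lf x ≤ Lf y := by
    have h1 : abv (g (x 0) * ξ - g (x 1)) ≤ Lf y := by
      calc abv (g (x 0) * ξ - g (x 1))
          ≤ abv (g c) * abv (g (x 0) * ξ - g (x 1)) :=
            le_mul_of_one_le_left (abv.nonneg _) hc1
        _ = abv (g (y 0) * ξ - g (y 1)) := by rw [hscale1, abv.map_mul]
        _ ≤ Lf y := le_max_left _ _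
    have h2 : abv (g (x 0) * ξ ^ 2 - g (x 2)) ≤ Lf y := by
      calc abv (g (x 0) * ξ ^ 2 - g (x 2))
          ≤ abv (g c) * abv (g (x 0) * ξ ^ 2 - g (x 2)) :=
            le_mul_of_one_le_left (abv.nonneg _) hc1
        _ = abv (g (y 0) * ξ ^ 2 - g (y 2)) := by rw [hscale2, abv.map_mul]
        _ ≤ Lf y := le_max_right _ _
    exact max_le h1 h2
  exact absurd hLy_lt_Lx (not_lt.mpr hge)
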